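/- Let N ≥ 2, ρ = e^{2πi/N}, and let m_0, …, m_{N−1} ∈ L^∞(𝕋) be such that the N×N matrix C(z) with entries C(z)_{k,j} = N^{−1/2} m_j(ρ^k z) is unitary for almost every z ∈ 𝕋. Define the isometry T on L²(𝕋) by (T ξ)(z) = N^{−1/2} ∑_{k=0}^{N−1} m_k(z) ξ(ρ^k z^N), the isometry S_C on L²(𝕋; ℂ^N) by (S_C ξ)(z) = C(z) ξ(z^N), and the isometric embedding V : L²(𝕋) → L²(𝕋; ℂ^N) by (V ξ)(z) = N^{−1/2} (ξ(z), ξ(ρz), …, ξ(ρ^{N−1} z)). Then S_C V = V T, and the unitary subspaces of the Wold decompositions coincide under V: ⋂_{k≥1} S_C^k(L²(𝕋; ℂ^N)) = V( ⋂_{k≥1} T^k(L²(𝕋)) ). -/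

import Mathlib

open MeasureTheory Real

noncomputable section

instance : Fact (0 < 2 * Real.pi) := ⟨by positivity⟩

/-- The circle `𝕋 = ℝ/2πℤ`, written additively; `N • z` corresponds to `z ↦ z^N` and
`z + 2πk/N` corresponds to `ρ^k z` with `ρ = e^{2πi/N}`. -/
abbrev Circle2π : Type := AddCircle (2 * Real.pi)

/-- Normalized Haar (probability) measure on the circle. -/
abbrev haarT : Measure Circle2π := AddCircle.haarAddCircle

/-- `L²(𝕋)`. -/
abbrev HT : Type := Lp ℂ 2 haarT

/-- `L²(𝕋; ℂᴺ)`. -/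
abbrev HTn (N : ℕ) : Type := Lp (EuclideanSpace ℂ (Fin N)) 2 haarT

/-- The matrix `C(z)` with entries `C(z)_{k,j} = N^{-1/2} m_j(ρ^k z)`. -/
def Cmat (N : ℕ) (m : Fin N → Circle2π → ℂ) (z : Circle2π) : Matrix (Fin N) (Fin N) ℂ :=
  Matrix.of fun k j : Fin N =>
    (Real.sqrt N : ℂ)⁻¹ * m j (z + (((k : ℕ) : ℝ) * (2 * Real.pi / N) : ℝ))

/-- **Section 5 (Proposition Y.1).** The operator
`(Tξ)(z) = N^{-1/2} ∑_k m_k(z) ξ(ρ^k z^N)` is dilated by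
`(S_C ξ)(z) = C(z) ξ(z^N)` via the isometric embedding
`(Vξ)(z) = N^{-1/2}(ξ(z), ξ(ρz), …, ξ(ρ^{N-1}z))`, i.e. `S_C V = V T`; and the unitary
subspaces of the Wold decompositions agree: `H_U(S_C) = V(H_U(T))`. -/
theorem unitary_part_of_dilation_eq_image_of_unitary_part
    (N : ℕ) (hN : 2 ≤ N)
    (m : Fin N → Circle2π → ℂ)
    (hm_meas : ∀ k, Measurable (m k))
    (hC_unitary : ∀ᵐ z ∂haarT,
      Cmat N m z * star (Cmat N m z) = 1 ∧ star (Cmat N m z) * Cmat N m z = 1)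
    -- the isometry `T` on `L²(𝕋)`
    (T : HT →L[ℂ] HT)
    (hT : ∀ ξ : HT, ⇑(T ξ) =ᵐ[haarT] fun z =>
      (Real.sqrt N : ℂ)⁻¹ * ∑ k : Fin N,
        m k z * ξ (N • z + (((k : ℕ) : ℝ) * (2 * Real.pi / N) : ℝ)))
    -- the isometry `S_C` on `L²(𝕋; ℂᴺ)`
    (SC : HTn N →L[ℂ] HTn N)
    (hSC : ∀ ξ : HTn N, ⇑(SC ξ) =ᵐ[haarT] fun z =>
      (WithLp.equiv 2 (Fin N → ℂ)).symm
        ((Cmat N m z).mulVec (WithLp.equiv 2 (Fin N → ℂ) (ξ (N • z)))))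
    -- the isometric embedding `V : L²(𝕋) → L²(𝕋; ℂᴺ)`
    (V : HT →L[ℂ] HTn N)
    (hV : ∀ ξ : HT, ⇑(V ξ) =ᵐ[haarT] fun z =>
      (WithLp.equiv 2 (Fin N → ℂ)).symm
        (fun k : Fin N =>
          (Real.sqrt N : ℂ)⁻¹ * ξ (z + (((k : ℕ) : ℝ) * (2 * Real.pi / N) : ℝ)))) :
    SC.comp V = V.comp T ∧
    (⋂ k : ℕ, Set.range ⇑(SC ^ (k + 1))) = V '' (⋂ k : ℕ, Set.range ⇑(T ^ (k + 1))) := by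
  haveI : NeZero N := ⟨by omega⟩
  have hN0 : (N : ℝ) ≠ 0 := by positivity
  have hs0 : (Real.sqrt N : ℂ) ≠ 0 := by
    simp only [ne_eq, Complex.ofReal_eq_zero]
    exact Real.sqrt_ne_zero'.mpr (by positivity)
  -- offsets
  set c : Fin N → Circle2π :=
    fun k => ((((k : ℕ) : ℝ) * (2 * Real.pi / N) : ℝ) : Circle2π) with hc
  -- `N • c k = 0`
  have key0 : ∀ k : Fin N, (N : ℕ) • c k = 0 := by
    intro k
    rw [hc, ← AddCircle.coe_nsmul, AddCircle.coe_eq_zero_iff]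
    exact ⟨(k : ℕ), by push_cast [nsmul_eq_mul, zsmul_eq_mul]; field_simp⟩
  have c0 : c 0 = 0 := by
    simp [hc]
  -- measure preserving maps
  have mpD : MeasurePreserving (fun z : Circle2π => N • z) haarT haarT := by
    have h := MeasureTheory.Measure.measurePreserving_zsmul (μ := haarT) (n := (N : ℤ))
      (by exact_mod_cast (by omega : N ≠ 0))
    simpa [natCast_zsmul] using h
  have mpT : ∀ a : Circle2π, MeasurePreserving (fun z : Circle2π => z + a) haarT haarT :=
    fun a => measurePreserving_add_right haarT a
  -- intertwining at the level of vectors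
  have hVT : ∀ ξ : HT, SC (V ξ) = V (T ξ) := by
    intro ξ
    apply Lp.ext
    have h2 := mpD.quasiMeasurePreserving.ae_eq_comp (hV ξ)
    have h4 : ∀ k : Fin N, _ :=
      fun k : Fin N => (mpT (c k)).quasiMeasurePreserving.ae_eq_comp (hT ξ)
    filter_upwards [hSC (V ξ), h2, hV (T ξ), ae_all_iff.2 h4] with z e1 e2 e3 e4
    simp only [Function.comp_apply] at e2 e4
    rw [e1, e2, e3]
    congr 1; funext k
    simp only [Cmat, Matrix.mulVec,
      Matrix.of_apply, dotProduct, Equiv.apply_symm_apply, e4 k]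
    have harg : ∀ j : Fin N, N • (z + c k) + c j = N • z + c j := fun j => by
      rw [smul_add, key0, add_zero]
    rw [e4 k]; simp only [hc] at harg ⊢; simp only [harg]
    rw [Finset.mul_sum, Finset.mul_sum]
    exact Finset.sum_congr rfl fun j _ => by ring
  -- range SC ⊆ range V
  have hRange : ∀ ζ : HTn N, ∃ ξ : HT, V ξ = SC ζ := by
    intro ζ
    set η : HTn N := SC ζ with hη
    set ξ : HT :=
      (Real.sqrt N : ℂ) • ((EuclideanSpace.proj (0 : Fin N) :
        EuclideanSpace ℂ (Fin N) →L[ℂ] ℂ).compLp η) with hξdef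
    refine ⟨ξ, ?_⟩
    have hξ : ⇑ξ =ᵐ[haarT] fun z => (Real.sqrt N : ℂ) * η z 0 := by
      filter_upwards [Lp.coeFn_smul (Real.sqrt N : ℂ)
        ((EuclideanSpace.proj (0 : Fin N) : EuclideanSpace ℂ (Fin N) →L[ℂ] ℂ).compLp η),
        (EuclideanSpace.proj (0 : Fin N) :
          EuclideanSpace ℂ (Fin N) →L[ℂ] ℂ).coeFn_compLp η] with z e1 e2
      rw [hξdef, e1]
      simp [e2]
    -- ξ translated
    have hξt : ∀ k : Fin N, _ :=
      fun k : Fin N => (mpT (c k)).quasiMeasurePreserving.ae_eq_comp hξ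
    have hηt : ∀ k : Fin N, _ :=
      fun k : Fin N => (mpT (c k)).quasiMeasurePreserving.ae_eq_comp (hSC ζ)
    apply Lp.ext
    filter_upwards [hV ξ, ae_all_iff.2 hξt, ae_all_iff.2 hηt, hSC ζ] with z e1 e2 e3 e4
    simp only [Function.comp_apply] at e2 e3
    rw [e1, e4]
    congr 1; funext k
    rw [e2 k, ← mul_assoc, inv_mul_cancel₀ hs0, one_mul, e3 k]
    simp only [WithLp.equiv_symm_apply, WithLp.ofLp_toLp, Cmat, Matrix.mulVec,
      Matrix.of_apply, dotProduct, Equiv.apply_symm_apply]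
    rw [smul_add, key0, add_zero]
    refine Finset.sum_congr rfl fun j _ => ?_
    have : z + c k + ((((0 : Fin N) : ℕ) : ℝ) * (2 * Real.pi / N) : ℝ) = z + c k := by
      rw [show ((((0 : Fin N) : ℕ) : ℝ) * (2 * Real.pi / N) : ℝ) = (0 : ℝ) by simp, ]
      simp
    rw [this]
  -- powers intertwine
  have hpow : ∀ (n : ℕ) (ξ : HT), (SC ^ n) (V ξ) = V ((T ^ n) ξ) := by
    intro n
    induction n with
    | zero => intro ξ; simp
    | succ n ih =>
      intro ξ
      rw [pow_succ', pow_succ', ContinuousLinearMap.mul_apply, ContinuousLinearMap.mul_apply,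
        ih, hVT]
  -- V injective
  have hVinj : Function.Injective V := by
    have h0 : ∀ η : HT, V η = 0 → η = 0 := by
      intro η hη0
      have hz : ⇑(V η) =ᵐ[haarT] 0 := by rw [hη0]; exact Lp.coeFn_zero _ _ _
      apply Lp.ext
      have := (hV η).symm.trans hz
      filter_upwards [this, Lp.coeFn_zero ℂ 2 haarT] with z e1 e2
      have e1' := congrArg (fun v : EuclideanSpace ℂ (Fin N) => WithLp.ofLp v (0 : Fin N)) e1
      simp only [WithLp.equiv_symm_apply, WithLp.ofLp_toLp, Pi.zero_apply, WithLp.ofLp_zero] at e1'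
      rw [e2]
      have hz0 : z + ((((0 : Fin N) : ℕ) : ℝ) * (2 * Real.pi / N) : ℝ) = z := by
        rw [show ((((0 : Fin N) : ℕ) : ℝ) * (2 * Real.pi / N) : ℝ) = (0 : ℝ) by simp]
        simp
      rw [hz0] at e1'
      simpa [inv_eq_zero, hs0] using e1'
    intro a b hab
    have : V (a - b) = 0 := by rw [map_sub, hab, sub_self]
    exact sub_eq_zero.mp (h0 _ this)
  constructor
  · exact ContinuousLinearMap.ext fun ξ => hVT ξ
  · ext x
    simp only [Set.mem_iInter, Set.mem_range, Set.mem_image]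
    constructor
    · intro hx
      -- x = SC^(k+2) ζ for all k
      obtain ⟨ζ₁, hζ₁⟩ := hx 1
      obtain ⟨ξ₁, hξ₁⟩ := hRange ζ₁
      -- x = SC^2 ζ₁ = SC (SC ζ₁) = SC (V ξ₁) = V (T ξ₁)
      have hx1 : x = V (T ξ₁) := by
        rw [← hVT, hξ₁, show SC (SC ζ₁) = (SC ^ (1 + 1)) ζ₁ from by
          rw [pow_succ SC 1, pow_one]; rfl, hζ₁]
      refine ⟨T ξ₁, fun k => ?_, hx1.symm⟩
      obtain ⟨ζ, hζ⟩ := hx (k + 1)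
      obtain ⟨ξ, hξ⟩ := hRange ζ
      have : x = V ((T ^ (k + 1)) ξ) := by
        rw [← hpow, hξ, show (SC ^ (k + 1)) (SC ζ) = (SC ^ (k + 1 + 1)) ζ from by
          rw [pow_succ SC (k + 1)]; rfl, hζ]
      refine ⟨ξ, ?_⟩
      exact (hVinj (by rw [← this, ← hx1])).symm
    · rintro ⟨y, hy, rfl⟩ k
      obtain ⟨w, hw⟩ := hy k
      exact ⟨V w, by rw [hpow, hw]⟩
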